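/- Let X be a real Banach space whose dual X* is isometrically isomorphic to ℓ₁. If X contains an isometric copy of c, then X is not polyhedral; equivalently, a polyhedral predual of ℓ₁ contains no isometric copy of c. -/

import Mathlib

open Filter Topology Metric
open scoped ENNReal

noncomputable section

/-- The space `ℓ₁` of absolutely summable real sequences. -/
abbrev EllOne : Type := lp (fun _ : ℕ => ℝ) 1

/-- The subspace of `ℓ∞` consisting of convergent real sequences. -/
def convSeq : Subspace ℝ (lp (fun _ : ℕ => ℝ) ∞) where
  carrier := {f | ∃ l : ℝ, Tendsto (fun n => f n) atTop (𝓝 l)}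
  add_mem' := by
    rintro f g ⟨a, ha⟩ ⟨b, hb⟩
    exact ⟨a + b, by simpa [lp.coeFn_add] using ha.add hb⟩
  zero_mem' := ⟨0, by simp [lp.coeFn_zero]⟩
  smul_mem' := by
    rintro c f ⟨a, ha⟩
    exact ⟨c * a, by simpa [lp.coeFn_smul] using ha.const_mul c⟩

/-- The Banach space `c` of convergent real sequences with the sup norm,
realized as a subspace of `ℓ∞`. -/
abbrev SpaceC : Type := ↥convSeq

/-- A normed space is polyhedral if the unit ball of each of its
finite-dimensional subspaces is a polytope (the convex hull of finitely many points). -/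
def IsPolyhedralSpace (X : Type*) [NormedAddCommGroup X] [NormedSpace ℝ X] : Prop :=
  ∀ Y : Subspace ℝ X, FiniteDimensional ℝ Y →
    ∃ F : Set Y, F.Finite ∧ closedBall (0 : Y) 1 = convexHull ℝ F

/-- The set of extreme points of the closed unit ball of the dual of `X`. -/
def extBdual (X : Type*) [NormedAddCommGroup X] [NormedSpace ℝ X] :
    Set (StrongDual ℝ X) :=
  Set.extremePoints ℝ (closedBall (0 : StrongDual ℝ X) 1)

/-- `D(x) = {x* ∈ S_{X*} : x*(x) = 1}`. -/
def Dface {X : Type*} [NormedAddCommGroup X] [NormedSpace ℝ X] (x : X) :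
    Set (StrongDual ℝ X) :=
  {f | ‖f‖ = 1 ∧ f x = 1}

/-! ### Auxiliary construction: two vectors in `c` spanning a non-polyhedral plane -/

/-- The sequence `1/(m+1)`. -/
def tt' (m : ℕ) : ℝ := ((m : ℝ) + 1)⁻¹

lemma tt'_pos (m : ℕ) : 0 < tt' m := by rw [tt']; positivity

lemma tt'_le_one (m : ℕ) : tt' m ≤ 1 := by
  rw [tt', inv_le_one_iff₀]
  right; linarith [Nat.cast_nonneg (α := ℝ) m]

lemma tt'_lt {m n : ℕ} (h : m < n) : tt' n < tt' m := by
  rw [tt', tt']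
  apply inv_strictAnti₀ (by positivity)
  have : (m : ℝ) < n := by exact_mod_cast h
  linarith

lemma tt'_tendsto : Tendsto tt' atTop (𝓝 0) := by
  unfold tt'
  simpa [tt', one_div] using tendsto_one_div_add_atTop_nhds_zero_nat (𝕜 := ℝ)

lemma uMem : Memℓp (fun m => 1 - tt' m ^ 2) (∞ : ℝ≥0∞) := by
  apply memℓp_infty
  refine ⟨1, ?_⟩
  rintro x ⟨m, rfl⟩
  have h1 := tt'_pos m
  have h2 := tt'_le_one m
  simp only [Real.norm_eq_abs]
  rw [abs_le]
  constructor <;> nlinarith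

lemma vMem : Memℓp (fun m => tt' m) (∞ : ℝ≥0∞) := by
  apply memℓp_infty
  refine ⟨1, ?_⟩
  rintro x ⟨m, rfl⟩
  have h1 := tt'_pos m
  have h2 := tt'_le_one m
  simp only [Real.norm_eq_abs]
  rw [abs_le]
  constructor <;> nlinarith

/-- First spanning vector: `u_m = 1 - t_m²`. -/
def uu : SpaceC :=
  ⟨⟨fun m => 1 - tt' m ^ 2, uMem⟩, ⟨1, by
    have h2 : Tendsto (fun m => tt' m ^ 2) atTop (𝓝 0) := by simpa using tt'_tendsto.pow 2
    simpa using (tendsto_const_nhds (x := (1 : ℝ))).sub h2⟩⟩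

/-- Second spanning vector: `v_m = t_m`. -/
def vv : SpaceC := ⟨⟨fun m => tt' m, vMem⟩, ⟨0, tt'_tendsto⟩⟩

lemma coord_apply (a b : ℝ) (m : ℕ) :
    (((a • uu + b • vv : SpaceC) : lp (fun _ : ℕ => ℝ) ∞)) m
      = a * (1 - tt' m ^ 2) + b * tt' m := by
  simp [uu, vv]; rfl

/-- The denominator `1 + t_n t_{n+1}`. -/
def Dd (n : ℕ) : ℝ := 1 + tt' n * tt' (n + 1)

lemma Dd_pos (n : ℕ) : 0 < Dd n := by
  have := tt'_pos n; have := tt'_pos (n + 1)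
  rw [Dd]; nlinarith

/-- The extreme points: `w n` is the intersection of the supporting lines through
`p(t_n)` and `p(t_{n+1})` of the curve `p(t) = (1 - t², t)`. -/
def ww (n : ℕ) : SpaceC :=
  (1 / Dd n) • uu + ((tt' n + tt' (n + 1)) / Dd n) • vv

lemma ww_coord (n m : ℕ) :
    ((ww n : lp (fun _ : ℕ => ℝ) ∞)) m
      = (1 - tt' m ^ 2 + (tt' n + tt' (n + 1)) * tt' m) / Dd n := by
  rw [ww, coord_apply]
  have hd : Dd n ≠ 0 := (Dd_pos n).ne'
  field_simp

lemma abs_fval_le_one {a b s : ℝ} (hb : 0 < b) (hba : b < a) (ha : a ≤ 1)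
    (hs0 : 0 ≤ s) (hs1 : s ≤ 1) (hsep : 0 ≤ (s - a) * (s - b)) :
    |(1 - s ^ 2 + (a + b) * s) / (1 + a * b)| ≤ 1 := by
  have hd : 0 < 1 + a * b := by nlinarith
  rw [abs_le]
  constructor
  · rw [le_div_iff₀ hd]; nlinarith
  · rw [div_le_one hd]; nlinarith

lemma fval_lt_one {a b s : ℝ} (hb : 0 < b) (hba : b < a)
    (hs0 : 0 ≤ s) (hsep : 0 < (s - a) * (s - b)) :
    (1 - s ^ 2 + (a + b) * s) / (1 + a * b) < 1 := by
  have hd : 0 < 1 + a * b := by nlinarith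
  rw [div_lt_one hd]; nlinarith

lemma sep_nonneg (n m : ℕ) :
    0 ≤ (tt' m - tt' n) * (tt' m - tt' (n + 1)) := by
  rcases le_or_gt m n with h | h
  · have h1 : tt' n ≤ tt' m := by
      rcases eq_or_lt_of_le h with h' | h'
      · rw [h']
      · exact (tt'_lt h').le
    have h2 : tt' (n + 1) < tt' n := tt'_lt (Nat.lt_succ_self n)
    nlinarith
  · have h1 : tt' m ≤ tt' (n + 1) := by
      rcases eq_or_lt_of_le (Nat.succ_le_of_lt h) with h' | h'
      · exact le_of_eq (congrArg tt' h'.symm)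
      · exact (tt'_lt h').le
    have h2 : tt' (n + 1) < tt' n := tt'_lt (Nat.lt_succ_self n)
    nlinarith

lemma ww_norm_le (n : ℕ) : ‖ww n‖ ≤ 1 := by
  rw [Submodule.coe_norm]
  apply lp.norm_le_of_forall_le zero_le_one
  intro m
  rw [Real.norm_eq_abs, ww_coord, Dd]
  exact abs_fval_le_one (tt'_pos (n + 1)) (tt'_lt (Nat.lt_succ_self n)) (tt'_le_one n)
    (tt'_pos m).le (tt'_le_one m) (sep_nonneg n m)

lemma ww_coord_self (n : ℕ) : ((ww n : lp (fun _ : ℕ => ℝ) ∞)) n = 1 := by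
  rw [ww_coord, Dd]
  have hd : (0:ℝ) < 1 + tt' n * tt' (n + 1) := by
    have := tt'_pos n; have := tt'_pos (n + 1); nlinarith
  field_simp
  ring

lemma ww_coord_succ (n : ℕ) : ((ww n : lp (fun _ : ℕ => ℝ) ∞)) (n + 1) = 1 := by
  rw [ww_coord, Dd]
  have hd : (0:ℝ) < 1 + tt' n * tt' (n + 1) := by
    have := tt'_pos n; have := tt'_pos (n + 1); nlinarith
  rw [div_eq_one_iff_eq hd.ne']
  ring

lemma ww_coord_lt {k n : ℕ} (h : k < n) :
    ((ww k : lp (fun _ : ℕ => ℝ) ∞)) (n + 1) < 1 := by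
  rw [ww_coord, Dd]
  apply fval_lt_one (tt'_pos (k + 1)) (tt'_lt (Nat.lt_succ_self k)) (tt'_pos (n + 1)).le
  have h1 : tt' (n + 1) < tt' k := tt'_lt (h.trans (Nat.lt_succ_self n))
  have h2 : tt' (n + 1) < tt' (k + 1) := tt'_lt (Nat.succ_lt_succ h)
  nlinarith

lemma ww_inj : Function.Injective ww := by
  intro k n h
  by_contra hkn
  rcases Nat.lt_or_ge k n with hlt | hge
  · have h1 := ww_coord_lt hlt
    have h2 := ww_coord_succ n
    rw [h] at h1
    linarith
  · have hlt : n < k := lt_of_le_of_ne hge (Ne.symm hkn)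
    have h1 := ww_coord_lt hlt
    have h2 := ww_coord_succ k
    rw [← h] at h1
    linarith

lemma unique_sol {a b x y : ℝ} (hb : 0 < b) (hba : b < a)
    (h1 : x * (1 - a ^ 2) + y * a = 1) (h2 : x * (1 - b ^ 2) + y * b = 1) :
    x = 1 / (1 + a * b) ∧ y = (a + b) / (1 + a * b) := by
  have hd : 0 < 1 + a * b := by nlinarith
  have key : (a - b) * (y - x * (a + b)) = 0 := by linear_combination h1 - h2
  have hy : y = x * (a + b) := by
    rcases mul_eq_zero.1 key with h | h
    · exfalso; linarith
    · linarith
  have hx : x * (1 + a * b) = 1 := by linear_combination h1 - a * hy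
  constructor
  · rw [eq_div_iff hd.ne']; exact hx
  · rw [eq_div_iff hd.ne']; linear_combination (a + b) * hx + (1 + a * b) * hy

set_option maxHeartbeats 1000000 in
/-- If a predual of `ℓ₁` contains an isometric copy of `c`, then it is not polyhedral. -/
theorem not_polyhedral_of_isometric_c
    {X : Type} [NormedAddCommGroup X] [NormedSpace ℝ X] [CompleteSpace X]
    (hdual : Nonempty (StrongDual ℝ X ≃ₗᵢ[ℝ] EllOne))
    (hc : Nonempty (SpaceC →ₗᵢ[ℝ] X)) :
    ¬ IsPolyhedralSpace X := by
  obtain ⟨J⟩ := hc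
  intro hpoly
  set Y : Subspace ℝ X := Submodule.span ℝ {J uu, J vv} with hYdef
  have hYfd : FiniteDimensional ℝ Y := FiniteDimensional.span_of_finite ℝ (Set.toFinite _)
  obtain ⟨F, hFfin, hball⟩ := hpoly Y hYfd
  have hwY : ∀ n, J (ww n) ∈ Y := by
    intro n
    apply Submodule.mem_span_pair.2
    exact ⟨1 / Dd n, (tt' n + tt' (n + 1)) / Dd n, by rw [← map_smul, ← map_smul, ← map_add]; rfl⟩
  let q : ℕ → Y := fun n => ⟨J (ww n), hwY n⟩
  have hq : ∀ n, ((q n : Y) : X) = J (ww n) := fun n => rfl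
  have hnormq : ∀ n, ‖q n‖ = ‖ww n‖ := by
    intro n
    rw [Submodule.coe_norm, hq n]
    exact J.norm_map (ww n)
  have hqball : ∀ n, q n ∈ closedBall (0 : Y) 1 := by
    intro n
    rw [mem_closedBall_zero_iff, hnormq]
    exact ww_norm_le n
  -- coordinate bound for elements of the ball
  have keybound : ∀ (x : Y), ‖x‖ ≤ 1 → ∀ a b : ℝ,
      a • J uu + b • J vv = (x : X) → ∀ m, |a * (1 - tt' m ^ 2) + b * tt' m| ≤ 1 := by
    intro x hx a b hab m
    have hJ : J (a • uu + b • vv) = (x : X) := by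
      rw [map_add, map_smul, map_smul]; exact hab
    have hnorm : ‖a • uu + b • vv‖ ≤ 1 := by
      rw [← J.norm_map (a • uu + b • vv), hJ, ← Submodule.coe_norm]; exact hx
    have happ := lp.norm_apply_le_norm (E := fun _ : ℕ => ℝ) (p := ∞)
      ENNReal.top_ne_zero ((a • uu + b • vv : SpaceC) : lp (fun _ : ℕ => ℝ) ∞) m
    rw [Real.norm_eq_abs, coord_apply] at happ
    calc |a * (1 - tt' m ^ 2) + b * tt' m|
        ≤ ‖((a • uu + b • vv : SpaceC) : lp (fun _ : ℕ => ℝ) ∞)‖ := happ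
      _ = ‖(a • uu + b • vv : SpaceC)‖ := (Submodule.coe_norm _).symm
      _ ≤ 1 := hnorm
  -- each q n is an extreme point of the unit ball of Y
  have hqext : ∀ n, q n ∈ Set.extremePoints ℝ (closedBall (0 : Y) 1) := by
    intro n
    refine ⟨hqball n, ?_⟩
    intro x1 hx1 x2 hx2 hseg
    obtain ⟨a1, b1, hab1⟩ := Submodule.mem_span_pair.1 x1.2
    obtain ⟨a2, b2, hab2⟩ := Submodule.mem_span_pair.1 x2.2
    obtain ⟨t1, t2, ht1, ht2, hsum, heq⟩ := hseg
    have hx1' : ‖x1‖ ≤ 1 := mem_closedBall_zero_iff.1 hx1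
    have hx2' : ‖x2‖ ≤ 1 := mem_closedBall_zero_iff.1 hx2
    have hb1 := keybound x1 hx1' a1 b1 hab1
    have hb2 := keybound x2 hx2' a2 b2 hab2
    -- transfer the convex combination back to SpaceC
    have hJ1 : J (a1 • uu + b1 • vv) = (x1 : X) := by
      rw [map_add, map_smul, map_smul]; exact hab1
    have hJ2 : J (a2 • uu + b2 • vv) = (x2 : X) := by
      rw [map_add, map_smul, map_smul]; exact hab2
    have heqX : t1 • (x1 : X) + t2 • (x2 : X) = J (ww n) := by
      have h := congrArg (Subtype.val : Y → X) heq
      push_cast at h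
      exact h
    have heqC : t1 • (a1 • uu + b1 • vv) + t2 • (a2 • uu + b2 • vv) = ww n := by
      apply J.injective
      rw [map_add, map_smul, map_smul, hJ1, hJ2]
      exact heqX
    -- coordinates of the convex combination
    have hcoord : ∀ m, t1 * (a1 * (1 - tt' m ^ 2) + b1 * tt' m)
        + t2 * (a2 * (1 - tt' m ^ 2) + b2 * tt' m)
        = ((ww n : lp (fun _ : ℕ => ℝ) ∞)) m := by
      intro m
      have := congrArg (fun s : SpaceC => ((s : lp (fun _ : ℕ => ℝ) ∞)) m) heqC
      simp only at this
      rw [← this]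
      have e1 : ((((a1 • uu + b1 • vv : SpaceC)) : lp (fun _ : ℕ => ℝ) ∞)) m
          = a1 * (1 - tt' m ^ 2) + b1 * tt' m := coord_apply a1 b1 m
      have e2 : ((((a2 • uu + b2 • vv : SpaceC)) : lp (fun _ : ℕ => ℝ) ∞)) m
          = a2 * (1 - tt' m ^ 2) + b2 * tt' m := coord_apply a2 b2 m
      rw [← e1, ← e2]
      simp only [Submodule.coe_add, Submodule.coe_smul, lp.coeFn_add, lp.coeFn_smul,
        Pi.add_apply, Pi.smul_apply, smul_eq_mul]
    -- at coordinates n and n+1 equality is forced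
    have hones : ∀ m, ((ww n : lp (fun _ : ℕ => ℝ) ∞)) m = 1 →
        a1 * (1 - tt' m ^ 2) + b1 * tt' m = 1 ∧ a2 * (1 - tt' m ^ 2) + b2 * tt' m = 1 := by
      intro m hm
      have hc := hcoord m
      rw [hm] at hc
      have h1 := (abs_le.1 (hb1 m)).2
      have h2 := (abs_le.1 (hb2 m)).2
      constructor <;> nlinarith [mul_le_mul_of_nonneg_left h1 ht1.le,
        mul_le_mul_of_nonneg_left h2 ht2.le]
    obtain ⟨h1n, h2n⟩ := hones n (ww_coord_self n)
    obtain ⟨h1s, h2s⟩ := hones (n + 1) (ww_coord_succ n)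
    -- solve the linear system
    have hbpos := tt'_pos (n + 1)
    have hba := tt'_lt (Nat.lt_succ_self n)
    have hu1 := unique_sol hbpos hba (by linarith [h1n] : a1 * (1 - tt' n ^ 2) + b1 * tt' n = 1)
      (by linarith [h1s] : a1 * (1 - tt' (n + 1) ^ 2) + b1 * tt' (n + 1) = 1)
    have hu2 := unique_sol hbpos hba h2n h2s
    have hs1 : (a1 • uu + b1 • vv : SpaceC) = ww n := by
      rw [ww, Dd, hu1.1, hu1.2]
    have hs2 : (a2 • uu + b2 • vv : SpaceC) = ww n := by
      rw [ww, Dd, hu2.1, hu2.2]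
    apply Subtype.ext
    rw [← hJ1, hs1]
  -- q is injective
  have hqinj : Function.Injective q := by
    intro k n h
    exact ww_inj (J.injective (congrArg Subtype.val h))
  -- conclude: F would be infinite
  have hinf : F.Infinite := by
    apply Set.infinite_of_injective_forall_mem hqinj
    intro n
    have h := hqext n
    rw [hball] at h
    exact extremePoints_convexHull_subset h
  exact hinf hFfin

end
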